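/- The number π² + 1 is an eigenvalue of E(0, 0, 1/2, 0); indeed the 6th standard basis vector e₆ of ℂ⁷ satisfies E(0,0,1/2,0)·e₆ = (π² + 1)·e₆. On the other hand, π² + 1 is not an eigenvalue of any of the matrices E(1/2, 0, 0, 0), E(−1/2, 0, 0, 0), E(0, 1/2, 0, 0), E(0, −1/2, 0, 0), E(0, 0, 0, 1/2), E(0, 0, 0, −1/2). -/
import Mathlib


noncomputable section

/-- The 7×7 complex matrix E(A₁,A₂,B₁,B₂) from the one-form spectrum computation
on Example III, where S² = A₁² + A₂² + B₁² + B₂². -/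
def Emat (A1 A2 B1 B2 : ℝ) : Matrix (Fin 7) (Fin 7) ℂ :=
  let p : ℂ := (Real.pi : ℂ)
  let i : ℂ := Complex.I
  let S2 : ℂ := ((A1 ^ 2 + A2 ^ 2 + B1 ^ 2 + B2 ^ 2 : ℝ) : ℂ)
  let a1 : ℂ := (A1 : ℂ)
  let a2 : ℂ := (A2 : ℂ)
  let b1 : ℂ := (B1 : ℂ)
  let b2 : ℂ := (B2 : ℂ)
  !![4*p^2*S2, 0, 0, 0, -2*p*i*b1, -2*p*i*b2, 0;
     0, 4*p^2*S2, 0, 0, -2*p*i*b2, 0, 0;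
     0, 0, 4*p^2*S2, 0, 2*p*i*a1, 0, -2*p*i*b2;
     0, 0, 0, 4*p^2*S2, 2*p*i*a2, 2*p*i*a1, 2*p*i*b1;
     2*p*i*b1, 2*p*i*b2, -2*p*i*a1, -2*p*i*a2, 4*p^2*S2 + 2, 0, 2*p*i*a1;
     2*p*i*b2, 0, 0, -2*p*i*a1, 0, 4*p^2*S2 + 1, 2*p*i*a2;
     0, 0, 2*p*i*b2, -2*p*i*b1, -2*p*i*a1, -2*p*i*a2, 4*p^2*S2 + 3]

lemma cons_val_five' {α : Type*} {m : ℕ} (x : α) (u : Fin m.succ.succ.succ.succ.succ → α) :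
    Matrix.vecCons x u 5 =
      Matrix.vecHead (Matrix.vecTail (Matrix.vecTail (Matrix.vecTail (Matrix.vecTail u)))) :=
  rfl

lemma cons_val_six' {α : Type*} {m : ℕ} (x : α) (u : Fin m.succ.succ.succ.succ.succ.succ → α) :
    Matrix.vecCons x u 6 =
      Matrix.vecHead (Matrix.vecTail (Matrix.vecTail (Matrix.vecTail
        (Matrix.vecTail (Matrix.vecTail u))))) :=
  rfl

lemma cancel' {c x : ℂ} (hc : c ≠ 0) (h : c * x = 0) : x = 0 :=
  (mul_eq_zero.mp h).resolve_left hc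

lemma hpi_ne : (Real.pi : ℂ) ≠ 0 := Complex.ofReal_ne_zero.mpr Real.pi_ne_zero

lemma hpI_ne : (Real.pi : ℂ) * Complex.I ≠ 0 := mul_ne_zero hpi_ne Complex.I_ne_zero

lemma hp1_ne : ((Real.pi : ℂ) ^ 2 + 1) ≠ 0 := by
  have h : ((Real.pi ^ 2 + 1 : ℝ) : ℂ) ≠ 0 := Complex.ofReal_ne_zero.mpr (by positivity)
  intro hc; apply h; push_cast; linear_combination hc

lemma hp2_ne : ((Real.pi : ℂ) ^ 2 + 2) ≠ 0 := by
  have h : ((Real.pi ^ 2 + 2 : ℝ) : ℂ) ≠ 0 := Complex.ofReal_ne_zero.mpr (by positivity)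
  intro hc; apply h; push_cast; linear_combination hc

lemma keyne : ¬(4 * (Real.pi : ℂ) ^ 2 * (1/4) = (Real.pi : ℂ) ^ 2 + 1) :=
  fun hc => one_ne_zero (α := ℂ) (by linear_combination -hc)

set_option maxHeartbeats 2000000 in
/-- π² + 1 is an eigenvalue of E(0,0,1/2,0), with eigenvector the 6th standard basis
vector e₆ of ℂ⁷; but π² + 1 is not an eigenvalue of E(±1/2,0,0,0), E(0,±1/2,0,0),
or E(0,0,0,±1/2). -/
theorem stmt16 :
    (Emat 0 0 (1/2) 0).mulVec (Pi.single 5 1) =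
      ((Real.pi : ℂ) ^ 2 + 1) • (Pi.single 5 1 : Fin 7 → ℂ) ∧
    (Pi.single 5 1 : Fin 7 → ℂ) ≠ 0 ∧
    (∀ v : Fin 7 → ℂ,
      (Emat (1/2) 0 0 0).mulVec v = ((Real.pi : ℂ) ^ 2 + 1) • v → v = 0) ∧
    (∀ v : Fin 7 → ℂ,
      (Emat (-(1/2)) 0 0 0).mulVec v = ((Real.pi : ℂ) ^ 2 + 1) • v → v = 0) ∧
    (∀ v : Fin 7 → ℂ,
      (Emat 0 (1/2) 0 0).mulVec v = ((Real.pi : ℂ) ^ 2 + 1) • v → v = 0) ∧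
    (∀ v : Fin 7 → ℂ,
      (Emat 0 (-(1/2)) 0 0).mulVec v = ((Real.pi : ℂ) ^ 2 + 1) • v → v = 0) ∧
    (∀ v : Fin 7 → ℂ,
      (Emat 0 0 0 (1/2)).mulVec v = ((Real.pi : ℂ) ^ 2 + 1) • v → v = 0) ∧
    (∀ v : Fin 7 → ℂ,
      (Emat 0 0 0 (-(1/2))).mulVec v = ((Real.pi : ℂ) ^ 2 + 1) • v → v = 0) := by
  refine ⟨?_, ?_, ?_, ?_, ?_, ?_, ?_, ?_⟩
  · rw [Matrix.mulVec_single]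
    funext i
    fin_cases i <;>
      simp [Emat, Pi.single_apply, cons_val_five', cons_val_six'] <;> ring
  · intro h
    simpa using congrFun h 5
  · intro v h
    have h0 := congrFun h 0
    have h1 := congrFun h 1
    have h2 := congrFun h 2
    have h3 := congrFun h 3
    have h4 := congrFun h 4
    have h5 := congrFun h 5
    have h6 := congrFun h 6
    clear h
    simp only [Emat, Matrix.mulVec, dotProduct, Fin.sum_univ_seven, Pi.smul_apply,
      smul_eq_mul, Matrix.cons_val', Matrix.cons_val_zero, Matrix.cons_val_one, Matrix.head_cons,
      Matrix.cons_val_two, Matrix.tail_cons, Matrix.cons_val_three, Matrix.cons_val_four,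
      cons_val_five', cons_val_six',
      Matrix.empty_val', Matrix.cons_val_fin_one, Matrix.head_fin_const,
      Matrix.of_apply, Matrix.cons_val_succ] at h0 h1 h2 h3 h4 h5 h6
    norm_num at h0 h1 h2 h3 h4 h5 h6
    have hv0 : v 0 = 0 := h0.resolve_left keyne
    have hv1 : v 1 = 0 := h1.resolve_left keyne
    have hI3 : (Real.pi : ℂ) * Complex.I * v 3 = 0 := by linear_combination (-(1):ℂ)*h5
    have hv3 : v 3 = 0 := cancel' hpI_ne hI3
    have hI5 : (Real.pi : ℂ) * Complex.I * v 5 = 0 := by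
      linear_combination (1:ℂ)*h3 + (1:ℂ)*hv3
    have hv5 : v 5 = 0 := cancel' hpI_ne hI5
    have hI4 : ((Real.pi : ℂ)^2 + 2) * v 4 = 0 := by
      linear_combination (-2*(1:ℂ)*(Real.pi:ℂ)*Complex.I)*h2 + 2*h4 +
        (-(1:ℂ)*(Real.pi:ℂ)*Complex.I)*h6 + ((Real.pi:ℂ)^2 * v 4)*Complex.I_sq
    have hv4 : v 4 = 0 := cancel' hp2_ne hI4
    have hv2 : v 2 = 0 := by linear_combination -h2 + ((1:ℂ)*(Real.pi:ℂ)*Complex.I)*hv4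
    have hv6 : v 6 = 0 := by linear_combination h6/2 + ((1:ℂ)*(Real.pi:ℂ)*Complex.I/2)*hv4
    funext j
    fin_cases j <;> simp only [Pi.zero_apply] <;>
      first | exact hv0 | exact hv1 | exact hv2 | exact hv3 | exact hv4 | exact hv5 | exact hv6
  · intro v h
    have h0 := congrFun h 0
    have h1 := congrFun h 1
    have h2 := congrFun h 2
    have h3 := congrFun h 3
    have h4 := congrFun h 4
    have h5 := congrFun h 5
    have h6 := congrFun h 6
    clear h
    simp only [Emat, Matrix.mulVec, dotProduct, Fin.sum_univ_seven, Pi.smul_apply,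
      smul_eq_mul, Matrix.cons_val', Matrix.cons_val_zero, Matrix.cons_val_one, Matrix.head_cons,
      Matrix.cons_val_two, Matrix.tail_cons, Matrix.cons_val_three, Matrix.cons_val_four,
      cons_val_five', cons_val_six',
      Matrix.empty_val', Matrix.cons_val_fin_one, Matrix.head_fin_const,
      Matrix.of_apply, Matrix.cons_val_succ] at h0 h1 h2 h3 h4 h5 h6
    norm_num at h0 h1 h2 h3 h4 h5 h6
    have hv0 : v 0 = 0 := h0.resolve_left keyne
    have hv1 : v 1 = 0 := h1.resolve_left keyne
    have hI3 : (Real.pi : ℂ) * Complex.I * v 3 = 0 := by linear_combination (-(-1):ℂ)*h5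
    have hv3 : v 3 = 0 := cancel' hpI_ne hI3
    have hI5 : (Real.pi : ℂ) * Complex.I * v 5 = 0 := by
      linear_combination (-1:ℂ)*h3 + (-1:ℂ)*hv3
    have hv5 : v 5 = 0 := cancel' hpI_ne hI5
    have hI4 : ((Real.pi : ℂ)^2 + 2) * v 4 = 0 := by
      linear_combination (-2*(-1:ℂ)*(Real.pi:ℂ)*Complex.I)*h2 + 2*h4 +
        (-(-1:ℂ)*(Real.pi:ℂ)*Complex.I)*h6 + ((Real.pi:ℂ)^2 * v 4)*Complex.I_sq
    have hv4 : v 4 = 0 := cancel' hp2_ne hI4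
    have hv2 : v 2 = 0 := by linear_combination -h2 + ((-1:ℂ)*(Real.pi:ℂ)*Complex.I)*hv4
    have hv6 : v 6 = 0 := by linear_combination h6/2 + ((-1:ℂ)*(Real.pi:ℂ)*Complex.I/2)*hv4
    funext j
    fin_cases j <;> simp only [Pi.zero_apply] <;>
      first | exact hv0 | exact hv1 | exact hv2 | exact hv3 | exact hv4 | exact hv5 | exact hv6
  · intro v h
    have h0 := congrFun h 0
    have h1 := congrFun h 1
    have h2 := congrFun h 2
    have h3 := congrFun h 3
    have h4 := congrFun h 4
    have h5 := congrFun h 5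
    have h6 := congrFun h 6
    clear h
    simp only [Emat, Matrix.mulVec, dotProduct, Fin.sum_univ_seven, Pi.smul_apply,
      smul_eq_mul, Matrix.cons_val', Matrix.cons_val_zero, Matrix.cons_val_one, Matrix.head_cons,
      Matrix.cons_val_two, Matrix.tail_cons, Matrix.cons_val_three, Matrix.cons_val_four,
      cons_val_five', cons_val_six',
      Matrix.empty_val', Matrix.cons_val_fin_one, Matrix.head_fin_const,
      Matrix.of_apply, Matrix.cons_val_succ] at h0 h1 h2 h3 h4 h5 h6
    norm_num at h0 h1 h2 h3 h4 h5 h6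
    have hv0 : v 0 = 0 := h0.resolve_left keyne
    have hv1 : v 1 = 0 := h1.resolve_left keyne
    have hv2 : v 2 = 0 := h2.resolve_left keyne
    have hI4 : ((Real.pi : ℂ)^2 + 1) * v 4 = 0 := by
      linear_combination (-(1:ℂ)*(Real.pi:ℂ)*Complex.I)*h3 + h4 +
        ((Real.pi:ℂ)^2 * v 4)*Complex.I_sq
    have hv4 : v 4 = 0 := cancel' hp1_ne hI4
    have hv3 : v 3 = 0 := by linear_combination -h3 + ((1:ℂ)*(Real.pi:ℂ)*Complex.I)*hv4
    have hI6 : (Real.pi : ℂ) * Complex.I * v 6 = 0 := by linear_combination (1:ℂ)*h5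
    have hv6 : v 6 = 0 := cancel' hpI_ne hI6
    have hI5 : (Real.pi : ℂ) * Complex.I * v 5 = 0 := by
      linear_combination (-(1):ℂ)*h6 + (2*(1:ℂ))*hv6
    have hv5 : v 5 = 0 := cancel' hpI_ne hI5
    funext j
    fin_cases j <;> simp only [Pi.zero_apply] <;>
      first | exact hv0 | exact hv1 | exact hv2 | exact hv3 | exact hv4 | exact hv5 | exact hv6
  · intro v h
    have h0 := congrFun h 0
    have h1 := congrFun h 1
    have h2 := congrFun h 2
    have h3 := congrFun h 3
    have h4 := congrFun h 4
    have h5 := congrFun h 5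
    have h6 := congrFun h 6
    clear h
    simp only [Emat, Matrix.mulVec, dotProduct, Fin.sum_univ_seven, Pi.smul_apply,
      smul_eq_mul, Matrix.cons_val', Matrix.cons_val_zero, Matrix.cons_val_one, Matrix.head_cons,
      Matrix.cons_val_two, Matrix.tail_cons, Matrix.cons_val_three, Matrix.cons_val_four,
      cons_val_five', cons_val_six',
      Matrix.empty_val', Matrix.cons_val_fin_one, Matrix.head_fin_const,
      Matrix.of_apply, Matrix.cons_val_succ] at h0 h1 h2 h3 h4 h5 h6
    norm_num at h0 h1 h2 h3 h4 h5 h6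
    have hv0 : v 0 = 0 := h0.resolve_left keyne
    have hv1 : v 1 = 0 := h1.resolve_left keyne
    have hv2 : v 2 = 0 := h2.resolve_left keyne
    have hI4 : ((Real.pi : ℂ)^2 + 1) * v 4 = 0 := by
      linear_combination (-(-1:ℂ)*(Real.pi:ℂ)*Complex.I)*h3 + h4 +
        ((Real.pi:ℂ)^2 * v 4)*Complex.I_sq
    have hv4 : v 4 = 0 := cancel' hp1_ne hI4
    have hv3 : v 3 = 0 := by linear_combination -h3 + ((-1:ℂ)*(Real.pi:ℂ)*Complex.I)*hv4
    have hI6 : (Real.pi : ℂ) * Complex.I * v 6 = 0 := by linear_combination (-1:ℂ)*h5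
    have hv6 : v 6 = 0 := cancel' hpI_ne hI6
    have hI5 : (Real.pi : ℂ) * Complex.I * v 5 = 0 := by
      linear_combination (-(-1):ℂ)*h6 + (2*(-1:ℂ))*hv6
    have hv5 : v 5 = 0 := cancel' hpI_ne hI5
    funext j
    fin_cases j <;> simp only [Pi.zero_apply] <;>
      first | exact hv0 | exact hv1 | exact hv2 | exact hv3 | exact hv4 | exact hv5 | exact hv6
  · intro v h
    have h0 := congrFun h 0
    have h1 := congrFun h 1
    have h2 := congrFun h 2
    have h3 := congrFun h 3
    have h4 := congrFun h 4
    have h5 := congrFun h 5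
    have h6 := congrFun h 6
    clear h
    simp only [Emat, Matrix.mulVec, dotProduct, Fin.sum_univ_seven, Pi.smul_apply,
      smul_eq_mul, Matrix.cons_val', Matrix.cons_val_zero, Matrix.cons_val_one, Matrix.head_cons,
      Matrix.cons_val_two, Matrix.tail_cons, Matrix.cons_val_three, Matrix.cons_val_four,
      cons_val_five', cons_val_six',
      Matrix.empty_val', Matrix.cons_val_fin_one, Matrix.head_fin_const,
      Matrix.of_apply, Matrix.cons_val_succ] at h0 h1 h2 h3 h4 h5 h6
    norm_num at h0 h1 h2 h3 h4 h5 h6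
    have hv3 : v 3 = 0 := h3.resolve_left keyne
    have hI0 : (Real.pi : ℂ) * Complex.I * v 0 = 0 := by linear_combination (1:ℂ)*h5
    have hv0 : v 0 = 0 := cancel' hpI_ne hI0
    have hI5 : (Real.pi : ℂ) * Complex.I * v 5 = 0 := by
      linear_combination (-(1):ℂ)*h0 - (1:ℂ)*hv0
    have hv5 : v 5 = 0 := cancel' hpI_ne hI5
    have hI4 : ((Real.pi : ℂ)^2 + 1) * v 4 = 0 := by
      linear_combination ((1:ℂ)*(Real.pi:ℂ)*Complex.I)*h1 + h4 +
        ((Real.pi:ℂ)^2 * v 4)*Complex.I_sq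
    have hv4 : v 4 = 0 := cancel' hp1_ne hI4
    have hv1 : v 1 = 0 := by linear_combination -h1 - ((1:ℂ)*(Real.pi:ℂ)*Complex.I)*hv4
    have hI6 : ((Real.pi : ℂ)^2 + 2) * v 6 = 0 := by
      linear_combination ((1:ℂ)*(Real.pi:ℂ)*Complex.I)*h2 + h6 +
        ((Real.pi:ℂ)^2 * v 6)*Complex.I_sq
    have hv6 : v 6 = 0 := cancel' hp2_ne hI6
    have hv2 : v 2 = 0 := by linear_combination -h2 - ((1:ℂ)*(Real.pi:ℂ)*Complex.I)*hv6
    funext j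
    fin_cases j <;> simp only [Pi.zero_apply] <;>
      first | exact hv0 | exact hv1 | exact hv2 | exact hv3 | exact hv4 | exact hv5 | exact hv6
  · intro v h
    have h0 := congrFun h 0
    have h1 := congrFun h 1
    have h2 := congrFun h 2
    have h3 := congrFun h 3
    have h4 := congrFun h 4
    have h5 := congrFun h 5
    have h6 := congrFun h 6
    clear h
    simp only [Emat, Matrix.mulVec, dotProduct, Fin.sum_univ_seven, Pi.smul_apply,
      smul_eq_mul, Matrix.cons_val', Matrix.cons_val_zero, Matrix.cons_val_one, Matrix.head_cons,
      Matrix.cons_val_two, Matrix.tail_cons, Matrix.cons_val_three, Matrix.cons_val_four,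
      cons_val_five', cons_val_six',
      Matrix.empty_val', Matrix.cons_val_fin_one, Matrix.head_fin_const,
      Matrix.of_apply, Matrix.cons_val_succ] at h0 h1 h2 h3 h4 h5 h6
    norm_num at h0 h1 h2 h3 h4 h5 h6
    have hv3 : v 3 = 0 := h3.resolve_left keyne
    have hI0 : (Real.pi : ℂ) * Complex.I * v 0 = 0 := by linear_combination (-1:ℂ)*h5
    have hv0 : v 0 = 0 := cancel' hpI_ne hI0
    have hI5 : (Real.pi : ℂ) * Complex.I * v 5 = 0 := by
      linear_combination (-(-1):ℂ)*h0 - (-1:ℂ)*hv0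
    have hv5 : v 5 = 0 := cancel' hpI_ne hI5
    have hI4 : ((Real.pi : ℂ)^2 + 1) * v 4 = 0 := by
      linear_combination ((-1:ℂ)*(Real.pi:ℂ)*Complex.I)*h1 + h4 +
        ((Real.pi:ℂ)^2 * v 4)*Complex.I_sq
    have hv4 : v 4 = 0 := cancel' hp1_ne hI4
    have hv1 : v 1 = 0 := by linear_combination -h1 - ((-1:ℂ)*(Real.pi:ℂ)*Complex.I)*hv4
    have hI6 : ((Real.pi : ℂ)^2 + 2) * v 6 = 0 := by
      linear_combination ((-1:ℂ)*(Real.pi:ℂ)*Complex.I)*h2 + h6 +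
        ((Real.pi:ℂ)^2 * v 6)*Complex.I_sq
    have hv6 : v 6 = 0 := cancel' hp2_ne hI6
    have hv2 : v 2 = 0 := by linear_combination -h2 - ((-1:ℂ)*(Real.pi:ℂ)*Complex.I)*hv6
    funext j
    fin_cases j <;> simp only [Pi.zero_apply] <;>
      first | exact hv0 | exact hv1 | exact hv2 | exact hv3 | exact hv4 | exact hv5 | exact hv6
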